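/- Let f : X → X, c ∈ X, and x ∈ X. Suppose there exist nested sets C₁ ⊇ C₂ ⊇ … containing punctured neighborhoods of c, positive integers S_k ≥ 2^k, and constants C₁' > 0, ρ ∈ (0,1) such that: (a) for every k and every n, #{0 ≤ i < n : f^i(x) ∈ C_k} ≤ (n+1)/S_k; (b) every point of C_k \ C_{k+1} has distance at least C₁'·ρ^{k+1} from c; (c) for every δ > 0 small there is k₀(δ) with 𝒞_δ := {y : 0 < |y − c| < δ} ⊆ C_{k₀(δ)}, and k₀(δ) → ∞ as δ → 0. Then x satisfies the slow recurrence condition to c: lim_{δ→0} limsup_{n→∞} (1/n) Σ_{0 ≤ i < n, f^i(x) ∈ 𝒞_δ} (−log |f^i(x) − c|) = 0. -/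

import Mathlib

open Filter

/-- abstract slow recurrence. Under (a) the counting bound
`#{i < n : f^i x ∈ C k} ≤ (n+1)/S k` with `S k ≥ 2^k`, (b) points of
`C k \ C (k+1)` are at distance at least `C₁' ρ^(k+1)` from `c`, and (c) every
punctured `δ`-neighborhood of `c` is contained in some `C k₀` with arbitrarily
large `k₀`, the point `x` satisfies the slow recurrence condition to `c`. -/
theorem abstract_slow_recurrence {X : Type*} [MetricSpace X]
    (f : X → X) (c x : X) (C : ℕ → Set X)
    (hnest : ∀ k, C (k + 1) ⊆ C k)
    (S : ℕ → ℕ) (hS : ∀ k, 2 ^ k ≤ S k)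
    (C₁' ρ : ℝ) (hC₁' : 0 < C₁') (hρ : ρ ∈ Set.Ioo (0:ℝ) 1)
    (hcount : ∀ k n : ℕ,
      ((Set.ncard {i : ℕ | i < n ∧ f^[i] x ∈ C k} : ℝ)) ≤ ((n : ℝ) + 1) / (S k : ℝ))
    (hdist : ∀ k, ∀ y ∈ C k \ C (k + 1), C₁' * ρ ^ (k + 1) ≤ dist y c)
    (hnbhd : ∀ m : ℕ, ∃ δ : ℝ, 0 < δ ∧
      {y : X | 0 < dist y c ∧ dist y c < δ} ⊆ C m) :
    Tendsto (fun δ : ℝ =>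
        atTop.limsup (fun n : ℕ =>
          (1 / (n : ℝ)) * ∑ i ∈ Finset.range n,
            Set.indicator {y : X | 0 < dist y c ∧ dist y c < δ}
              (fun y => -Real.log (dist y c)) (f^[i] x)))
      (nhdsWithin 0 (Set.Ioi 0)) (nhds 0) := by
  classical
  obtain ⟨hρ0, hρ1⟩ := hρ
  set L : ℝ := Real.log ρ⁻¹ with hLdef
  have hL : 0 < L := Real.log_pos (one_lt_inv_iff₀.mpr ⟨hρ0, hρ1⟩)
  have hmono : Antitone C := antitone_nat_of_succ_le hnest
  have hSpos : ∀ k, 0 < (S k : ℝ) := by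
    intro k
    have := hS k
    have : 0 < S k := lt_of_lt_of_le (Nat.pow_pos (n := k) (by norm_num)) this
    exact_mod_cast this
  -- orbit points up to time n are not in C (n+1)
  have hexit : ∀ n i : ℕ, i < n → f^[i] x ∉ C (n + 1) := by
    intro n i hi hmem
    have hfin : {i' : ℕ | i' < i + 1 ∧ f^[i'] x ∈ C (n + 1)}.Finite :=
      Set.Finite.subset (Set.finite_Iio (i + 1)) (fun a ha => ha.1)
    have hpos : 0 < Set.ncard {i' : ℕ | i' < i + 1 ∧ f^[i'] x ∈ C (n + 1)} :=
      (Set.ncard_pos hfin).mpr ⟨i, ⟨Nat.lt_succ_self i, hmem⟩⟩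
    have h1 : (1 : ℝ) ≤ (Set.ncard {i' : ℕ | i' < i + 1 ∧ f^[i'] x ∈ C (n + 1)} : ℝ) := by
      exact_mod_cast hpos
    have h2 := hcount (n + 1) (i + 1)
    have h3 : (1 : ℝ) ≤ (((i : ℕ) : ℝ) + 1 + 1) / (S (n + 1) : ℝ) := by
      refine le_trans h1 ?_
      simpa using h2
    have h4 : (S (n + 1) : ℝ) ≤ ((i : ℝ) + 1 + 1) := by
      have := (le_div_iff₀ (hSpos (n + 1))).mp h3
      linarith
    have h5 : S (n + 1) ≤ i + 2 := by exact_mod_cast h4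
    have h6 : n + 1 < 2 ^ (n + 1) := Nat.lt_two_pow_self (n := n + 1)
    have h7 := hS (n + 1)
    omega
  -- counting in terms of indicator sums
  have hcnt : ∀ j n : ℕ,
      (∑ i ∈ Finset.range n, Set.indicator (C j) (fun _ => (1 : ℝ)) (f^[i] x))
        ≤ ((n : ℝ) + 1) / (S j : ℝ) := by
    intro j n
    have heq : (∑ i ∈ Finset.range n, Set.indicator (C j) (fun _ => (1 : ℝ)) (f^[i] x))
        = (((Finset.range n).filter (fun i => f^[i] x ∈ C j)).card : ℝ) := by
      rw [← Finset.sum_boole]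
      refine Finset.sum_congr rfl (fun i _ => ?_)
      by_cases h : f^[i] x ∈ C j <;> simp [Set.indicator_apply, h]
    have hset : {i : ℕ | i < n ∧ f^[i] x ∈ C j}
        = (((Finset.range n).filter (fun i => f^[i] x ∈ C j) : Finset ℕ) : Set ℕ) := by
      ext i; simp [Finset.mem_filter, Finset.mem_range]
    have := hcount j n
    rw [hset, Set.ncard_coe_finset] at this
    rw [heq]; exact this
  have hcnt2 : ∀ j n : ℕ,
      (∑ i ∈ Finset.range n, Set.indicator (C j) (fun _ => (1 : ℝ)) (f^[i] x))
        ≤ ((n : ℝ) + 1) * (1 / 2) ^ j := by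
    intro j n
    refine le_trans (hcnt j n) ?_
    rw [div_le_iff₀ (hSpos j)]
    have h2j : ((2 : ℝ) ^ j) ≤ (S j : ℝ) := by exact_mod_cast hS j
    have h2jpos : (0 : ℝ) < 2 ^ j := by positivity
    have hn1 : (0 : ℝ) ≤ (n : ℝ) + 1 := by positivity
    calc ((n : ℝ) + 1) = ((n : ℝ) + 1) * (1 / 2) ^ j * 2 ^ j := by
          rw [mul_assoc, one_div, inv_pow, inv_mul_cancel₀ (ne_of_gt h2jpos), mul_one]
      _ ≤ ((n : ℝ) + 1) * (1 / 2) ^ j * (S j : ℝ) := by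
          refine mul_le_mul_of_nonneg_left h2j ?_
          positivity
  -- geometric tail bound
  have hgeom : ∀ m n : ℕ, ∑ j ∈ Finset.Ico (m + 1) (n + 1), ((1 : ℝ) / 2) ^ j
      ≤ (1 / 2) ^ m := by
    intro m n
    rw [Finset.sum_Ico_eq_sum_range]
    have : ∑ i ∈ Finset.range (n + 1 - (m + 1)), ((1 : ℝ) / 2) ^ (m + 1 + i)
        = (1 / 2) ^ (m + 1) * ∑ i ∈ Finset.range (n + 1 - (m + 1)), ((1 : ℝ) / 2) ^ i := by
      rw [Finset.mul_sum]
      refine Finset.sum_congr rfl (fun i _ => ?_)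
      rw [pow_add]
    rw [this]
    calc ((1 : ℝ) / 2) ^ (m + 1) * ∑ i ∈ Finset.range (n + 1 - (m + 1)), ((1 : ℝ) / 2) ^ i
        ≤ (1 / 2) ^ (m + 1) * 2 := by
          refine mul_le_mul_of_nonneg_left (sum_geometric_two_le _) (by positivity)
      _ = (1 / 2) ^ m := by rw [pow_succ]; ring
  -- the error term E m tends to 0
  set E : ℕ → ℝ := fun m =>
    2 * (1 / 2) ^ m * (max (-Real.log C₁' + ((m : ℝ) + 1) * L) 0 + L) with hEdef
  have hEpos : ∀ m, 0 < E m := by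
    intro m
    have h0 : (0 : ℝ) ≤ max (-Real.log C₁' + ((m : ℝ) + 1) * L) 0 := le_max_right _ _
    have h12 : (0 : ℝ) < (1 / 2 : ℝ) ^ m := by positivity
    have : (0 : ℝ) < max (-Real.log C₁' + ((m : ℝ) + 1) * L) 0 + L := by linarith
    rw [hEdef]
    positivity
  have hE0 : Tendsto E atTop (nhds 0) := by
    have hb : ∀ m : ℕ, E m ≤ 2 * (|Real.log C₁'| + 2 * L) * (((m : ℝ) + 1) * (1 / 2) ^ m) := by
      intro m
      have h12 : (0 : ℝ) < (1 / 2 : ℝ) ^ m := by positivity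
      have hm1 : (1 : ℝ) ≤ (m : ℝ) + 1 := by
        have : (0 : ℝ) ≤ (m : ℝ) := Nat.cast_nonneg m
        linarith
      have hmax : max (-Real.log C₁' + ((m : ℝ) + 1) * L) 0 + L
          ≤ (|Real.log C₁'| + 2 * L) * ((m : ℝ) + 1) := by
        have habs : -Real.log C₁' ≤ |Real.log C₁'| := by
          rw [abs_eq_max_neg]; exact le_max_right _ _
        have habs0 : (0 : ℝ) ≤ |Real.log C₁'| := abs_nonneg _
        have h1 : max (-Real.log C₁' + ((m : ℝ) + 1) * L) 0
            ≤ |Real.log C₁'| + ((m : ℝ) + 1) * L := by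
          apply max_le
          · nlinarith
          · nlinarith
        nlinarith
      have : E m ≤ 2 * (1 / 2) ^ m * ((|Real.log C₁'| + 2 * L) * ((m : ℝ) + 1)) := by
        rw [hEdef]
        exact mul_le_mul_of_nonneg_left hmax (by positivity)
      calc E m ≤ 2 * (1 / 2) ^ m * ((|Real.log C₁'| + 2 * L) * ((m : ℝ) + 1)) := this
        _ = 2 * (|Real.log C₁'| + 2 * L) * (((m : ℝ) + 1) * (1 / 2) ^ m) := by ring
    have h1 : Tendsto (fun m : ℕ => (m : ℝ) * (1 / 2) ^ m) atTop (nhds 0) := by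
      have hs : Summable (fun m : ℕ => ((m : ℝ)) ^ 1 * (1 / 2) ^ m) := by
        have : ‖(1 / 2 : ℝ)‖ < 1 := by
          rw [Real.norm_eq_abs]
          exact abs_lt.mpr ⟨by norm_num, by norm_num⟩
        exact summable_pow_mul_geometric_of_norm_lt_one 1 this
      have := hs.tendsto_atTop_zero
      simpa using this
    have h2 : Tendsto (fun m : ℕ => ((1 : ℝ) / 2) ^ m) atTop (nhds 0) := by
      refine tendsto_pow_atTop_nhds_zero_of_lt_one (by norm_num) (by norm_num)
    have h3 : Tendsto (fun m : ℕ => ((m : ℝ) + 1) * (1 / 2) ^ m) atTop (nhds 0) := by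
      have := h1.add h2
      simp only [add_zero] at this
      refine Tendsto.congr (fun m => ?_) this
      ring
    have h4 : Tendsto (fun m : ℕ =>
        2 * (|Real.log C₁'| + 2 * L) * (((m : ℝ) + 1) * (1 / 2) ^ m)) atTop (nhds 0) := by
      have := h3.const_mul (2 * (|Real.log C₁'| + 2 * L))
      simpa using this
    exact squeeze_zero (fun m => (hEpos m).le) hb h4
  -- main estimate, for a fixed level m and suitable δ
  rw [Metric.tendsto_nhdsWithin_nhds]
  intro ε hε
  obtain ⟨m, hm⟩ := (hE0.eventually (gt_mem_nhds hε)).exists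
  obtain ⟨δ₀, hδ₀pos, hδ₀sub⟩ := hnbhd m
  refine ⟨min δ₀ 1, lt_min hδ₀pos one_pos, ?_⟩
  intro δ hδmem hδlt
  have hδpos : 0 < δ := hδmem
  rw [Real.dist_eq, sub_zero, abs_of_pos hδpos] at hδlt
  have hδδ₀ : δ < δ₀ := lt_of_lt_of_le hδlt (min_le_left _ _)
  have hδ1 : δ ≤ 1 := le_of_lt (lt_of_lt_of_le hδlt (min_le_right _ _))
  set U : Set X := {y : X | 0 < dist y c ∧ dist y c < δ} with hUdef
  have hUsub : U ⊆ C m := fun y hy => hδ₀sub ⟨hy.1, lt_of_lt_of_le hy.2 (le_of_lt hδδ₀)⟩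
  set g : ℕ → ℝ := fun i =>
    Set.indicator U (fun y => -Real.log (dist y c)) (f^[i] x) with hgdef
  set a : ℕ → ℝ := fun n => (1 / (n : ℝ)) * ∑ i ∈ Finset.range n, g i with hadef
  -- each g i is nonnegative
  have hg0 : ∀ i, 0 ≤ g i := by
    intro i
    refine Set.indicator_nonneg (fun y hy => ?_) _
    have h1 : dist y c ≤ 1 := le_of_lt (lt_of_lt_of_le hy.2 hδ1)
    have := Real.log_nonpos (le_of_lt hy.1) h1
    linarith
  have ha0 : ∀ n, 0 ≤ a n := by
    intro n
    refine mul_nonneg (by positivity) (Finset.sum_nonneg (fun i _ => hg0 i))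
  -- pointwise bound
  set B : ℝ := -Real.log C₁' + ((m : ℝ) + 1) * L with hBdef
  have hpoint : ∀ n i : ℕ, i < n →
      g i ≤ max B 0 * Set.indicator (C m) (fun _ => (1 : ℝ)) (f^[i] x)
        + L * ∑ j ∈ Finset.Ico (m + 1) (n + 1),
            Set.indicator (C j) (fun _ => (1 : ℝ)) (f^[i] x) := by
    intro n i hi
    by_cases hy : f^[i] x ∈ U
    · set y := f^[i] x with hydef
      have hym : y ∈ C m := hUsub hy
      have hmn : m ≤ n := by
        by_contra h
        push_neg at h
        exact hexit n i hi (hmono (by omega : n + 1 ≤ m) hym)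
      set k := Nat.findGreatest (fun j => f^[i] x ∈ C j) n with hkdef
      have hkm : m ≤ k := Nat.le_findGreatest hmn hym
      have hkn : k ≤ n := Nat.findGreatest_le n
      have hk : y ∈ C k := by
        simpa using Nat.findGreatest_spec (P := fun j => f^[i] x ∈ C j) hmn hym
      have hk1 : y ∉ C (k + 1) := by
        rcases Nat.lt_or_ge k n with h | h
        · exact Nat.findGreatest_is_greatest (Nat.lt_succ_self k) (by omega)
        · have : k = n := le_antisymm hkn h
          rw [this]
          exact hexit n i hi
      have hd := hdist k y ⟨hk, hk1⟩
      have hρk : (0 : ℝ) < C₁' * ρ ^ (k + 1) := by positivity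
      have hlog : -Real.log (dist y c) ≤ -Real.log C₁' + ((k : ℝ) + 1) * L := by
        have h1 : Real.log (C₁' * ρ ^ (k + 1)) ≤ Real.log (dist y c) :=
          Real.log_le_log hρk hd
        have h2 : Real.log (C₁' * ρ ^ (k + 1))
            = Real.log C₁' + ((k : ℝ) + 1) * Real.log ρ := by
          rw [Real.log_mul (ne_of_gt hC₁') (by positivity), Real.log_pow]
          push_cast; ring
        have h3 : L = -Real.log ρ := by rw [hLdef, Real.log_inv]
        rw [h2] at h1
        rw [h3]; linarith
      -- indicator at level m equals 1
      have him : Set.indicator (C m) (fun _ => (1 : ℝ)) y = 1 := Set.indicator_of_mem hym 1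
      -- sum of indicators dominates k - m
      have hsum : ((k : ℝ) - (m : ℝ)) ≤ ∑ j ∈ Finset.Ico (m + 1) (n + 1),
          Set.indicator (C j) (fun _ => (1 : ℝ)) y := by
        have hsub : Finset.Ico (m + 1) (k + 1) ⊆ Finset.Ico (m + 1) (n + 1) := by
          refine Finset.Ico_subset_Ico le_rfl (by omega)
        have h1 : ∑ j ∈ Finset.Ico (m + 1) (k + 1),
            Set.indicator (C j) (fun _ => (1 : ℝ)) y
            ≤ ∑ j ∈ Finset.Ico (m + 1) (n + 1),
            Set.indicator (C j) (fun _ => (1 : ℝ)) y := by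
          refine Finset.sum_le_sum_of_subset_of_nonneg hsub (fun j _ _ => ?_)
          exact Set.indicator_nonneg (fun _ _ => zero_le_one) _
        have h2 : ∑ j ∈ Finset.Ico (m + 1) (k + 1),
            Set.indicator (C j) (fun _ => (1 : ℝ)) y = ((k : ℝ) - (m : ℝ)) := by
          have : ∀ j ∈ Finset.Ico (m + 1) (k + 1),
              Set.indicator (C j) (fun _ => (1 : ℝ)) y = 1 := by
            intro j hj
            rw [Finset.mem_Ico] at hj
            have hjk : j ≤ k := by omega
            exact Set.indicator_of_mem (hmono hjk hk) 1
          rw [Finset.sum_congr rfl this, Finset.sum_const, Nat.card_Ico]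
          have : k + 1 - (m + 1) = k - m := by omega
          rw [this]
          have : ((k - m : ℕ) : ℝ) = (k : ℝ) - (m : ℝ) := by
            push_cast [Nat.cast_sub hkm]; ring
          simp [this]
        linarith
      have hgy : g i = -Real.log (dist y c) := Set.indicator_of_mem hy _
      rw [hgy, him, mul_one]
      have hBle : B ≤ max B 0 := le_max_left _ _
      have h4 : L * ((k : ℝ) - (m : ℝ)) ≤ L * ∑ j ∈ Finset.Ico (m + 1) (n + 1),
          Set.indicator (C j) (fun _ => (1 : ℝ)) y :=
        mul_le_mul_of_nonneg_left hsum hL.le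
      have h5 : -Real.log C₁' + ((k : ℝ) + 1) * L = B + L * ((k : ℝ) - (m : ℝ)) := by
        rw [hBdef]; ring
      calc -Real.log (dist y c) ≤ -Real.log C₁' + ((k : ℝ) + 1) * L := hlog
        _ = B + L * ((k : ℝ) - (m : ℝ)) := h5
        _ ≤ max B 0 + L * ∑ j ∈ Finset.Ico (m + 1) (n + 1),
              Set.indicator (C j) (fun _ => (1 : ℝ)) y := by
            exact add_le_add hBle h4
    · have hgz : g i = 0 := Set.indicator_of_notMem hy _
      rw [hgz]
      refine add_nonneg (mul_nonneg (le_max_right _ _) ?_) (mul_nonneg hL.le ?_)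
      · exact Set.indicator_nonneg (fun _ _ => zero_le_one) _
      · exact Finset.sum_nonneg (fun j _ =>
          Set.indicator_nonneg (fun _ _ => zero_le_one) _)
  -- the averages are bounded by E m
  have haE : ∀ n, a n ≤ E m := by
    intro n
    rcases Nat.eq_zero_or_pos n with h0 | hn
    · subst h0; simp only [hadef]; simpa using (hEpos m).le
    · have hnR : (0 : ℝ) < (n : ℝ) := by exact_mod_cast hn
      have hsum1 : ∑ i ∈ Finset.range n, g i
          ≤ max B 0 * (∑ i ∈ Finset.range n,
              Set.indicator (C m) (fun _ => (1 : ℝ)) (f^[i] x))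
            + L * ∑ j ∈ Finset.Ico (m + 1) (n + 1),
                (∑ i ∈ Finset.range n,
                  Set.indicator (C j) (fun _ => (1 : ℝ)) (f^[i] x)) := by
        have h1 : ∑ i ∈ Finset.range n, g i
            ≤ ∑ i ∈ Finset.range n,
              (max B 0 * Set.indicator (C m) (fun _ => (1 : ℝ)) (f^[i] x)
                + L * ∑ j ∈ Finset.Ico (m + 1) (n + 1),
                    Set.indicator (C j) (fun _ => (1 : ℝ)) (f^[i] x)) := by
          refine Finset.sum_le_sum (fun i hi => ?_)
          exact hpoint n i (Finset.mem_range.mp hi)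
        refine le_trans h1 ?_
        rw [Finset.sum_add_distrib, ← Finset.mul_sum, ← Finset.mul_sum]
        rw [Finset.sum_comm]
      have hB0 : (0 : ℝ) ≤ max B 0 := le_max_right _ _
      have h2 : max B 0 * (∑ i ∈ Finset.range n,
          Set.indicator (C m) (fun _ => (1 : ℝ)) (f^[i] x))
          ≤ max B 0 * (((n : ℝ) + 1) * (1 / 2) ^ m) :=
        mul_le_mul_of_nonneg_left (hcnt2 m n) hB0
      have h3 : ∑ j ∈ Finset.Ico (m + 1) (n + 1),
          (∑ i ∈ Finset.range n, Set.indicator (C j) (fun _ => (1 : ℝ)) (f^[i] x))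
          ≤ ((n : ℝ) + 1) * (1 / 2) ^ m := by
        calc ∑ j ∈ Finset.Ico (m + 1) (n + 1),
            (∑ i ∈ Finset.range n, Set.indicator (C j) (fun _ => (1 : ℝ)) (f^[i] x))
            ≤ ∑ j ∈ Finset.Ico (m + 1) (n + 1), ((n : ℝ) + 1) * (1 / 2) ^ j :=
              Finset.sum_le_sum (fun j _ => hcnt2 j n)
          _ = ((n : ℝ) + 1) * ∑ j ∈ Finset.Ico (m + 1) (n + 1), ((1 : ℝ) / 2) ^ j := by
              rw [Finset.mul_sum]
          _ ≤ ((n : ℝ) + 1) * (1 / 2) ^ m := by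
              refine mul_le_mul_of_nonneg_left (hgeom m n) (by positivity)
      have h4 : ∑ i ∈ Finset.range n, g i
          ≤ ((n : ℝ) + 1) * ((1 / 2) ^ m * (max B 0 + L)) := by
        have := le_trans hsum1 (add_le_add h2 (mul_le_mul_of_nonneg_left h3 hL.le))
        calc ∑ i ∈ Finset.range n, g i
            ≤ max B 0 * (((n : ℝ) + 1) * (1 / 2) ^ m)
              + L * (((n : ℝ) + 1) * (1 / 2) ^ m) := this
          _ = ((n : ℝ) + 1) * ((1 / 2) ^ m * (max B 0 + L)) := by ring
      have hn2 : (n : ℝ) + 1 ≤ 2 * (n : ℝ) := by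
        have : (1 : ℝ) ≤ (n : ℝ) := by exact_mod_cast hn
        linarith
      have h12 : (0 : ℝ) ≤ (1 / 2 : ℝ) ^ m * (max B 0 + L) := by
        have : (0 : ℝ) ≤ max B 0 + L := by linarith [hL]
        positivity
      have h5 : ∑ i ∈ Finset.range n, g i ≤ 2 * (n : ℝ) * ((1 / 2) ^ m * (max B 0 + L)) :=
        le_trans h4 (mul_le_mul_of_nonneg_right hn2 h12)
      have hEeq : E m = 2 * (1 / 2) ^ m * (max B 0 + L) := by rw [hEdef, hBdef]
      show (1 / (n : ℝ)) * ∑ i ∈ Finset.range n, g i ≤ E m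
      rw [hEeq, div_mul_eq_mul_div, one_mul, div_le_iff₀ hnR]
      calc ∑ i ∈ Finset.range n, g i ≤ 2 * (n : ℝ) * ((1 / 2) ^ m * (max B 0 + L)) := h5
        _ = 2 * (1 / 2) ^ m * (max B 0 + L) * (n : ℝ) := by ring
  -- conclude via limsup bounds
  have hbdd : IsBoundedUnder (· ≤ ·) atTop a := ⟨E m, eventually_map.mpr
    (Eventually.of_forall haE)⟩
  have hcob : IsCoboundedUnder (· ≤ ·) atTop a :=
    isCoboundedUnder_le_of_le atTop ha0
  have hup : atTop.limsup a ≤ E m := limsup_le_of_le hcob (Eventually.of_forall haE)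
  have hlow : (0 : ℝ) ≤ atTop.limsup a :=
    le_limsup_of_frequently_le (Frequently.of_forall ha0) hbdd
  rw [Real.dist_eq, sub_zero, abs_of_nonneg hlow]
  exact lt_of_le_of_lt hup hm
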